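/- Under the assumptions 0 < ā² < c² < 1 < a², M̄ > 0, B > 0, define s**(y) = (log y − log B)/log(1/c²) and F**(y) = ā^{2 s**(y)} y + M̄ (a^{2 s**(y)} − 1) − B for y > 0. Then F** is quasiconvex on (0, ∞): the function g(y) = F**'(y)/ā^{2 s**(y)} is strictly increasing in y, and F**'(y) has the same sign as g(y), so F**' changes sign at most once from negative to positive. -/

import Mathlib

/-- `b^{2s} := exp(2 s log b)` -/
noncomputable def pw (b s : ℝ) : ℝ := Real.exp (2 * s * Real.log b)

/-- `s**(y) = (log y - log B)/log(1/c²)` -/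
noncomputable def sstar2 (c B y : ℝ) : ℝ := (Real.log y - Real.log B) / Real.log (1 / c ^ 2)

/-- `F**(y) = ā^{2 s**(y)} y + M̄ (a^{2 s**(y)} - 1) - B` -/
noncomputable def Fstar2 (a abar c M B y : ℝ) : ℝ :=
  pw abar (sstar2 c B y) * y + M * (pw a (sstar2 c B y) - 1) - B

/-- `g(y) = F**'(y) / ā^{2 s**(y)}` -/
noncomputable def gfun (a abar c M B y : ℝ) : ℝ :=
  deriv (Fstar2 a abar c M B) y / pw abar (sstar2 c B y)

lemma pw_pos (b s : ℝ) : 0 < pw b s := Real.exp_pos _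

lemma hL_pos {c : ℝ} (hc : 0 < c) (h2 : c ^ 2 < 1) : 0 < Real.log (1 / c ^ 2) :=
  Real.log_pos (one_lt_one_div (pow_pos hc 2) h2)

lemma Fstar2_hasDerivAt {a abar c M B : ℝ} (hc : 0 < c) (h2 : c ^ 2 < 1) {y : ℝ}
    (hy : 0 < y) :
    HasDerivAt (Fstar2 a abar c M B)
      (pw abar (sstar2 c B y) * (2 * Real.log abar / Real.log (1 / c ^ 2) + 1)
        + M * (2 * Real.log a / Real.log (1 / c ^ 2)) * pw a (sstar2 c B y) / y) y := by
  have hL := hL_pos hc h2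
  have hLne : Real.log (1 / c ^ 2) ≠ 0 := hL.ne'
  have hs : HasDerivAt (sstar2 c B) (y⁻¹ / Real.log (1 / c ^ 2)) y :=
    ((Real.hasDerivAt_log hy.ne').sub_const (Real.log B)).div_const (Real.log (1 / c ^ 2))
  have hP : HasDerivAt (fun t => pw abar (sstar2 c B t))
      (pw abar (sstar2 c B y) * (2 * (y⁻¹ / Real.log (1 / c ^ 2)) * Real.log abar)) y := by
    simpa [pw] using ((hs.const_mul 2).mul_const (Real.log abar)).exp
  have hQ : HasDerivAt (fun t => pw a (sstar2 c B t))
      (pw a (sstar2 c B y) * (2 * (y⁻¹ / Real.log (1 / c ^ 2)) * Real.log a)) y := by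
    simpa [pw] using ((hs.const_mul 2).mul_const (Real.log a)).exp
  have h := ((hP.mul (hasDerivAt_id' (x := y))).add ((hQ.sub_const 1).const_mul M)).sub_const B
  have hfun : (fun t => pw abar (sstar2 c B t) * t + M * (pw a (sstar2 c B t) - 1) - B)
      = Fstar2 a abar c M B := by
    funext t; simp [Fstar2]
  replace h : HasDerivAt (fun t => pw abar (sstar2 c B t) * t + M * (pw a (sstar2 c B t) - 1) - B) _ y := h
  rw [hfun] at h
  convert h using 1
  field_simp

lemma gfun_eq {a abar c M B : ℝ} (hc : 0 < c) (h2 : c ^ 2 < 1) {y : ℝ} (hy : 0 < y) :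
    gfun a abar c M B y = (2 * Real.log abar / Real.log (1 / c ^ 2) + 1)
      + M * (2 * Real.log a / Real.log (1 / c ^ 2)) *
        Real.exp (((2 * Real.log a - 2 * Real.log abar) / Real.log (1 / c ^ 2)) *
          (Real.log y - Real.log B) - Real.log y) := by
  have hP : (0 : ℝ) < pw abar (sstar2 c B y) := pw_pos _ _
  set s := sstar2 c B y with hsdef
  have hexp : Real.exp (((2 * Real.log a - 2 * Real.log abar) / Real.log (1 / c ^ 2)) *
        (Real.log y - Real.log B) - Real.log y)
      = pw a s / (pw abar s * y) := by
    rw [pw, pw]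
    nth_rewrite 3 [← Real.exp_log hy]
    rw [← Real.exp_add, ← Real.exp_sub]
    congr 1
    rw [hsdef, sstar2]
    ring
  rw [gfun, ← hsdef, div_eq_iff hP.ne', (Fstar2_hasDerivAt hc h2 hy).deriv, hexp, ← hsdef]
  clear_value s
  have key : pw a s / (pw abar s * y) * pw abar s = pw a s / y := by
    rw [div_mul_eq_mul_div, mul_comm (pw a s) (pw abar s), mul_div_mul_left _ _ hP.ne']
  linear_combination -(M * (2 * Real.log a / Real.log (1 / c ^ 2))) * key

/-- `F**` is quasiconvex on `(0,∞)`: `g` is strictly increasing, `F**'` has the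
same sign as `g`, and `F**'` changes sign at most once, from negative to positive. -/
theorem Fstar2_quasiconvex (a abar c M B : ℝ)
    (ha : 0 < a) (habar : 0 < abar) (hc : 0 < c) (hM : 0 < M) (hB : 0 < B)
    (h1 : abar ^ 2 < c ^ 2) (h2 : c ^ 2 < 1) (h3 : 1 < a ^ 2) :
    QuasiconvexOn ℝ (Set.Ioi (0 : ℝ)) (Fstar2 a abar c M B) ∧
    StrictMonoOn (gfun a abar c M B) (Set.Ioi (0 : ℝ)) ∧
    (∀ y : ℝ, 0 < y →
      (0 < deriv (Fstar2 a abar c M B) y ↔ 0 < gfun a abar c M B y) ∧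
      (deriv (Fstar2 a abar c M B) y < 0 ↔ gfun a abar c M B y < 0)) ∧
    ∀ y₁ y₂ : ℝ, 0 < y₁ → y₁ ≤ y₂ →
      0 ≤ deriv (Fstar2 a abar c M B) y₁ → 0 ≤ deriv (Fstar2 a abar c M B) y₂ := by
  have hL := hL_pos hc h2
  -- basic log facts
  have ha1 : 1 < a := by nlinarith
  have hla : 0 < Real.log a := Real.log_pos ha1
  have habarc : abar < c := by nlinarith
  have hlabarc : Real.log abar < Real.log c := Real.log_lt_log habar habarc
  have hLval : Real.log (1 / c ^ 2) = -(2 * Real.log c) := by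
    rw [one_div, Real.log_inv, Real.log_pow]; push_cast; ring
  have hbe : 0 < 2 * Real.log a / Real.log (1 / c ^ 2) := div_pos (by linarith) hL
  have hD1 : 1 < (2 * Real.log a - 2 * Real.log abar) / Real.log (1 / c ^ 2) := by
    rw [one_lt_div hL, hLval]; linarith
  -- strict monotonicity of gfun
  have hmono : StrictMonoOn (gfun a abar c M B) (Set.Ioi (0 : ℝ)) := by
    intro y₁ hy₁ y₂ hy₂ hlt
    simp only [Set.mem_Ioi] at hy₁ hy₂
    rw [gfun_eq hc h2 hy₁, gfun_eq hc h2 hy₂]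
    have hlog : Real.log y₁ < Real.log y₂ := Real.log_lt_log hy₁ hlt
    set D := (2 * Real.log a - 2 * Real.log abar) / Real.log (1 / c ^ 2) with hD
    have harg : D * (Real.log y₁ - Real.log B) - Real.log y₁
        < D * (Real.log y₂ - Real.log B) - Real.log y₂ := by nlinarith
    have := Real.exp_lt_exp.mpr harg
    have hMb : 0 < M * (2 * Real.log a / Real.log (1 / c ^ 2)) := mul_pos hM hbe
    nlinarith
  -- sign equivalences
  have hsign : ∀ y : ℝ, 0 < y →
      (0 < deriv (Fstar2 a abar c M B) y ↔ 0 < gfun a abar c M B y) ∧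
      (deriv (Fstar2 a abar c M B) y < 0 ↔ gfun a abar c M B y < 0) := by
    intro y hy
    have hP : (0 : ℝ) < pw abar (sstar2 c B y) := pw_pos _ _
    constructor
    · rw [gfun, lt_div_iff₀ hP, zero_mul]
    · rw [gfun, div_lt_iff₀ hP, zero_mul]
  -- last part
  have hlast : ∀ y₁ y₂ : ℝ, 0 < y₁ → y₁ ≤ y₂ →
      0 ≤ deriv (Fstar2 a abar c M B) y₁ → 0 ≤ deriv (Fstar2 a abar c M B) y₂ := by
    intro y₁ y₂ hy₁ hle hd
    have hy₂ : 0 < y₂ := lt_of_lt_of_le hy₁ hle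
    have hg₁ : 0 ≤ gfun a abar c M B y₁ := by
      by_contra h
      push_neg at h
      exact absurd (((hsign y₁ hy₁).2.mpr h)) (not_lt.mpr hd)
    have hg₂ : 0 ≤ gfun a abar c M B y₂ := by
      rcases eq_or_lt_of_le hle with rfl | hlt
      · exact hg₁
      · exact le_of_lt (lt_of_le_of_lt hg₁ (hmono hy₁ hy₂ hlt))
    by_contra h
    push_neg at h
    exact absurd ((hsign y₂ hy₂).2.mp h) (not_lt.mpr hg₂)
  refine ⟨?_, hmono, hsign, hlast⟩
  -- quasiconvexity
  intro b
  rw [convex_iff_ordConnected]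
  constructor
  intro x hx y hy z hz
  simp only [Set.mem_sep_iff, Set.mem_Ioi] at hx hy ⊢
  obtain ⟨hx0, hxb⟩ := hx
  obtain ⟨hy0, hyb⟩ := hy
  obtain ⟨hxz, hzy⟩ := hz
  have hz0 : 0 < z := lt_of_lt_of_le hx0 hxz
  refine ⟨hz0, ?_⟩
  rcases le_total (gfun a abar c M B z) 0 with hgz | hgz
  · -- F antitone on [x, z], so F z ≤ F x ≤ b
    have hanti : AntitoneOn (Fstar2 a abar c M B) (Set.Icc x z) := by
      apply antitoneOn_of_deriv_nonpos (convex_Icc x z)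
      · intro t ht
        exact (Fstar2_hasDerivAt hc h2 (lt_of_lt_of_le hx0 ht.1)).continuousAt.continuousWithinAt
      · intro t ht
        rw [interior_Icc] at ht
        exact (Fstar2_hasDerivAt hc h2
          (lt_of_lt_of_le hx0 ht.1.le)).differentiableAt.differentiableWithinAt
      · intro t ht
        rw [interior_Icc] at ht
        have ht0 : 0 < t := lt_of_lt_of_le hx0 ht.1.le
        have hgt : gfun a abar c M B t < 0 :=
          lt_of_lt_of_le (hmono ht0 hz0 ht.2) hgz
        exact ((hsign t ht0).2.mpr hgt).le
    exact le_trans (hanti (Set.left_mem_Icc.mpr hxz) (Set.right_mem_Icc.mpr hxz) hxz) hxb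
  · -- F monotone on [z, y], so F z ≤ F y ≤ b
    have hmonoF : MonotoneOn (Fstar2 a abar c M B) (Set.Icc z y) := by
      apply monotoneOn_of_deriv_nonneg (convex_Icc z y)
      · intro t ht
        exact (Fstar2_hasDerivAt hc h2 (lt_of_lt_of_le hz0 ht.1)).continuousAt.continuousWithinAt
      · intro t ht
        rw [interior_Icc] at ht
        exact (Fstar2_hasDerivAt hc h2
          (lt_of_lt_of_le hz0 ht.1.le)).differentiableAt.differentiableWithinAt
      · intro t ht
        rw [interior_Icc] at ht
        have ht0 : 0 < t := lt_trans hz0 ht.1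
        have hgt : 0 < gfun a abar c M B t :=
          lt_of_le_of_lt hgz (hmono hz0 ht0 ht.1)
        exact ((hsign t ht0).1.mpr hgt).le
    exact le_trans (hmonoF (Set.left_mem_Icc.mpr hzy) (Set.right_mem_Icc.mpr hzy) hzy) hyb
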